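/- Let V be a finite-dimensional inner product space, E: V → ℝ ∪ {∞} convex, P an orthogonal projection on V, η > 0. A pair (u*, λ*) with λ* ⊥ ker(I − P) is a critical point of the saddle point problem min_u max_λ { E(u) + ⟨(I − P)u, λ⟩ + (η/2)‖(I − P)u‖² } if and only if (I − P)u* = 0 and E(u) ≥ E(u*) − ⟨(I − P)(u − u*), λ*⟩ for all u ∈ V. -/

import Mathlib

open scoped RealInnerProductSpace

/-- Characterization of critical points of the saddle point problem
`min_u max_λ { E(u) + ⟨(I−P)u, λ⟩ + (η/2)‖(I−P)u‖² }`: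
a pair `(u*, λ*)` with `λ* ⊥ ker(I−P)` is a critical point iff `(I−P)u* = 0` and
`E u ≥ E u* − ⟨(I−P)(u − u*), λ*⟩` for all `u`. -/
theorem stmt_13 {V : Type*} [NormedAddCommGroup V] [InnerProductSpace ℝ V]
    [FiniteDimensional ℝ V] (E : V → EReal)
    (hbot : ∀ x : V, E x ≠ ⊥)
    (hE : ∀ x y : V, ∀ a b : ℝ, 0 ≤ a → 0 ≤ b → a + b = 1 →
      E (a • x + b • y) ≤ (a : EReal) * E x + (b : EReal) * E y)
    (P : V →ₗ[ℝ] V) (hidem : P ∘ₗ P = P)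
    (hsym : ∀ x y : V, ⟪P x, y⟫ = ⟪x, P y⟫)
    (η : ℝ) (hη : 0 < η)
    (ustar lamstar : V)
    (hlam : lamstar ∈ (LinearMap.ker (LinearMap.id - P))ᗮ) :
    -- critical point: u* minimizes L(·, λ*) and λ* maximizes λ ↦ ⟨(I−P)u*, λ⟩
    ((∀ u : V,
        E ustar + ((⟪ustar - P ustar, lamstar⟫
            + η / 2 * ‖ustar - P ustar‖ ^ 2 : ℝ) : EReal)
          ≤ E u + ((⟪u - P u, lamstar⟫ + η / 2 * ‖u - P u‖ ^ 2 : ℝ) : EReal)) ∧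
      (∀ lam : V, ⟪ustar - P ustar, lam⟫ ≤ ⟪ustar - P ustar, lamstar⟫)) ↔
    (ustar - P ustar = 0 ∧
      ∀ u : V, E ustar ≤ E u + ((⟪(u - ustar) - P (u - ustar), lamstar⟫ : ℝ) : EReal)) := by
  constructor
  · rintro ⟨hmin, hmax⟩
    have hv : ustar - P ustar = 0 := by
      have h1 := hmax (lamstar + (ustar - P ustar))
      rw [inner_add_right] at h1
      have h2 : ⟪ustar - P ustar, ustar - P ustar⟫ ≤ 0 := by linarith
      exact inner_self_eq_zero.mp (le_antisymm h2 real_inner_self_nonneg)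
    have hPu : P ustar = ustar := by
      have := sub_eq_zero.mp hv; exact this.symm
    have hmin' : ∀ u : V, E ustar ≤ E u + ((⟪u - P u, lamstar⟫
        + η / 2 * ‖u - P u‖ ^ 2 : ℝ) : EReal) := by
      intro u
      have := hmin u
      rw [hv] at this
      simpa using this
    refine ⟨hv, fun u => ?_⟩
    have hdiff : (u - ustar) - P (u - ustar) = u - P u := by
      rw [map_sub, hPu]; abel
    rw [hdiff]
    by_cases htop : E u = ⊤
    · rw [htop]
      rw [EReal.top_add_of_ne_bot (by exact_mod_cast EReal.coe_ne_bot _)]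
      exact le_top
    obtain ⟨s, hs⟩ : ∃ r : ℝ, E u = (r : ℝ) := ⟨(E u).toReal, (EReal.coe_toReal htop (hbot u)).symm⟩
    have hustop : E ustar ≠ ⊤ := by
      intro h
      have := hmin' u
      rw [h, hs] at this
      rw [← EReal.coe_add] at this
      exact EReal.coe_ne_top _ (top_le_iff.mp this)
    obtain ⟨r, hr⟩ : ∃ r : ℝ, E ustar = (r : ℝ) :=
      ⟨(E ustar).toReal, (EReal.coe_toReal hustop (hbot ustar)).symm⟩
    set a : ℝ := ⟪u - P u, lamstar⟫ with ha
    set c : ℝ := η / 2 * ‖u - P u‖ ^ 2 with hc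
    rw [hr, hs, ← EReal.coe_add, EReal.coe_le_coe_iff]
    -- real goal: r ≤ s + a
    have key : ∀ t : ℝ, 0 < t → t < 1 → r ≤ s + a + t * c := by
      intro t ht0 ht1
      have hconv := hE ustar u (1 - t) t (by linarith) ht0.le (by ring)
      have hmint := hmin' ((1 - t) • ustar + t • u)
      have heq : (1 - t) • ustar + t • u - P ((1 - t) • ustar + t • u) = t • (u - P u) := by
        rw [map_add, map_smul, map_smul, hPu, smul_sub]; abel
      rw [heq] at hmint
      have hin : ⟪t • (u - P u), lamstar⟫ = t * a := by
        rw [real_inner_smul_left]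
      have hnrm : η / 2 * ‖t • (u - P u)‖ ^ 2 = t ^ 2 * c := by
        rw [norm_smul, Real.norm_eq_abs, mul_pow, sq_abs]; ring
      rw [hin, hnrm, hr] at hmint
      have hchain : (r : EReal) ≤ (((1 - t) * r + t * s : ℝ) : EReal)
          + ((t * a + t ^ 2 * c : ℝ) : EReal) := by
        refine le_trans hmint (add_le_add_left ?_ _)
        refine le_trans hconv ?_
        rw [hr, hs]
        rw [← EReal.coe_mul, ← EReal.coe_mul, ← EReal.coe_add]
      rw [← EReal.coe_add, EReal.coe_le_coe_iff] at hchain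
      nlinarith [hchain]
    by_contra hcon
    push_neg at hcon
    set d : ℝ := r - s - a with hd
    have hd0 : 0 < d := by simp [hd]; linarith
    have hcnn : 0 ≤ c := by positivity
    rcases eq_or_lt_of_le hcnn with hc0 | hc0
    · have := key (1/2) (by norm_num) (by norm_num)
      rw [← hc0] at this; linarith
    · have ht := key (min (1/2) (d / (2 * c))) ?_ ?_
      · have h1 : min (1/2) (d / (2 * c)) ≤ d / (2 * c) := min_le_right _ _
        have h2 : min (1/2) (d / (2 * c)) * c ≤ d / 2 := by
          calc min (1/2) (d / (2 * c)) * c ≤ d / (2 * c) * c :=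
            mul_le_mul_of_nonneg_right h1 hcnn
          _ = d / 2 := by field_simp
        linarith
      · exact lt_min (by norm_num) (by positivity)
      · exact lt_of_le_of_lt (min_le_left _ _) (by norm_num)
  · rintro ⟨hv, hsub⟩
    have hPu : P ustar = ustar := (sub_eq_zero.mp hv).symm
    constructor
    · intro u
      rw [hv]
      have h0 : (⟪(0:V), lamstar⟫ + η / 2 * ‖(0:V)‖ ^ 2 : ℝ) = 0 := by simp
      rw [h0, EReal.coe_zero, add_zero]
      have h1 := hsub u
      have hdiff : (u - ustar) - P (u - ustar) = u - P u := by
        rw [map_sub, hPu]; abel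
      rw [hdiff] at h1
      refine le_trans h1 (add_le_add_right (EReal.coe_le_coe_iff.mpr ?_) _)
      nlinarith [sq_nonneg ‖u - P u‖]
    · intro lam
      rw [hv]
      simp
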